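/- Let λ ∈ ℂ, λ ≠ 0 and λ' ∈ ℂ, λ' ≠ 0. Then the pair (𝒜, ℬ) of structural matrices is strong structurally controllable for λ if and only if it is strong structurally controllable for λ'. -/

import Mathlib

open Matrix

lemma rank_smul_eq {m n : Type*} [Fintype m] [DecidableEq m] [Fintype n]
    (c : ℂ) (hc : c ≠ 0) (M : Matrix m n ℂ) : (c • M).rank = M.rank := by
  have h : c • M = (c • (1 : Matrix m m ℂ)) * M := by
    simp
  rw [h, rank_mul_eq_right_of_isUnit_det]
  simp only [det_smul, det_one, mul_one]
  exact (isUnit_iff_ne_zero.mpr (pow_ne_zero _ hc))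

lemma ssc_dir (n r : ℕ)
    (𝒜 : Matrix (Fin n) (Fin n) Bool) (ℬ : Matrix (Fin n) (Fin r) Bool)
    (lam lam' : ℂ) (hlam : lam ≠ 0) (hlam' : lam' ≠ 0)
    (h : ∀ (A : Matrix (Fin n) (Fin n) ℂ) (B : Matrix (Fin n) (Fin r) ℂ),
        (∀ i j, A i j ≠ 0 ↔ 𝒜 i j = true) →
        (∀ i j, B i j ≠ 0 ↔ ℬ i j = true) →
        (Matrix.of (fun i (v : Fin n ⊕ Fin r) =>
          Sum.elim (fun j => (lam • (1 : Matrix (Fin n) (Fin n) ℂ) - A) i j)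
                   (fun j => B i j) v)).rank = n) :
    ∀ (A : Matrix (Fin n) (Fin n) ℂ) (B : Matrix (Fin n) (Fin r) ℂ),
        (∀ i j, A i j ≠ 0 ↔ 𝒜 i j = true) →
        (∀ i j, B i j ≠ 0 ↔ ℬ i j = true) →
        (Matrix.of (fun i (v : Fin n ⊕ Fin r) =>
          Sum.elim (fun j => (lam' • (1 : Matrix (Fin n) (Fin n) ℂ) - A) i j)
                   (fun j => B i j) v)).rank = n := by
  intro A B hA hB
  set c : ℂ := lam / lam' with hcdef
  have hc : c ≠ 0 := div_ne_zero hlam hlam'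
  have hclam : c * lam' = lam := div_mul_cancel₀ _ hlam'
  have key := h (c • A) (c • B)
    (fun i j => by rw [← hA i j]; simp [smul_eq_mul, hc])
    (fun i j => by rw [← hB i j]; simp [smul_eq_mul, hc])
  have heq : c • (Matrix.of (fun i (v : Fin n ⊕ Fin r) =>
          Sum.elim (fun j => (lam' • (1 : Matrix (Fin n) (Fin n) ℂ) - A) i j)
                   (fun j => B i j) v))
      = Matrix.of (fun i (v : Fin n ⊕ Fin r) =>
          Sum.elim (fun j => (lam • (1 : Matrix (Fin n) (Fin n) ℂ) - c • A) i j)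
                   (fun j => (c • B) i j) v) := by
    ext i v
    cases v with
    | inl j =>
        simp only [Matrix.smul_apply, of_apply, Sum.elim_inl, Matrix.sub_apply, one_apply,
          smul_eq_mul]
        rcases eq_or_ne i j with rfl | hij
    -- diagonal / off-diagonal
        · simp [hclam, mul_sub, ← mul_assoc]
        · simp [hij, mul_sub]
    | inr j =>
        simp [smul_eq_mul]
  rw [← rank_smul_eq c hc, heq]
  exact key

/-- For nonzero `λ` and `λ'`, the structural pair `(𝒜, ℬ)` is strong
structurally controllable for `λ` iff it is for `λ'`. -/
theorem ssc_lambda_iff (n r : ℕ)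
    (𝒜 : Matrix (Fin n) (Fin n) Bool) (ℬ : Matrix (Fin n) (Fin r) Bool)
    (lam lam' : ℂ) (hlam : lam ≠ 0) (hlam' : lam' ≠ 0) :
    ((∀ (A : Matrix (Fin n) (Fin n) ℂ) (B : Matrix (Fin n) (Fin r) ℂ),
        (∀ i j, A i j ≠ 0 ↔ 𝒜 i j = true) →
        (∀ i j, B i j ≠ 0 ↔ ℬ i j = true) →
        (Matrix.of (fun i (v : Fin n ⊕ Fin r) =>
          Sum.elim (fun j => (lam • (1 : Matrix (Fin n) (Fin n) ℂ) - A) i j)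
                   (fun j => B i j) v)).rank = n)
      ↔
     (∀ (A : Matrix (Fin n) (Fin n) ℂ) (B : Matrix (Fin n) (Fin r) ℂ),
        (∀ i j, A i j ≠ 0 ↔ 𝒜 i j = true) →
        (∀ i j, B i j ≠ 0 ↔ ℬ i j = true) →
        (Matrix.of (fun i (v : Fin n ⊕ Fin r) =>
          Sum.elim (fun j => (lam' • (1 : Matrix (Fin n) (Fin n) ℂ) - A) i j)
                   (fun j => B i j) v)).rank = n)) := by
  constructor
  · exact ssc_dir n r 𝒜 ℬ lam lam' hlam hlam'
  · exact ssc_dir n r 𝒜 ℬ lam' lam hlam' hlam
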